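/- Let 0 < r ≤ 1/√2 and β ∈ (0, π), and set d = 1 − 2r²(1−r²)(1+cos β) (which is positive). Then there exists φ ∈ [0, π] satisfying sin φ = sin β·(1−2r²)/d and cos φ = −(4r²(r²−1) + cos β·(1+(1−2r²)²))/(2d), and for this φ the matrix identity R_L(φ)·R_R(π−β)·R_L(φ) = R_L(π)·R_R(π+β)·R_L(π) holds. Consequently the path L_φ R_{π−β} L_φ connects the same initial and final configurations as the path L_π R_{π+β} L_π and has strictly smaller length: r(2φ + (π−β)) < r(2π + (π+β)). (This is the core of the proof that a non-trivial CCCCC path is non-optimal for r ≤ 1/√2.) -/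

import Mathlib

open Real

noncomputable def OmegaL (r : ℝ) : Matrix (Fin 3) (Fin 3) ℝ :=
  !![0, -r, 0; r, 0, -Real.sqrt (1 - r ^ 2); 0, Real.sqrt (1 - r ^ 2), 0]

noncomputable def OmegaR (r : ℝ) : Matrix (Fin 3) (Fin 3) ℝ :=
  !![0, -r, 0; r, 0, Real.sqrt (1 - r ^ 2); 0, -Real.sqrt (1 - r ^ 2), 0]

noncomputable def OmegaG : Matrix (Fin 3) (Fin 3) ℝ :=
  !![0, -1, 0; 1, 0, 0; 0, 0, 0]

/-- Rotation matrix of a left turn of radius `r` and arc angle `φ`. -/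
noncomputable def RL (r φ : ℝ) : Matrix (Fin 3) (Fin 3) ℝ := NormedSpace.exp (φ • OmegaL r)

/-- Rotation matrix of a right turn of radius `r` and arc angle `φ`. -/
noncomputable def RR (r φ : ℝ) : Matrix (Fin 3) (Fin 3) ℝ := NormedSpace.exp (φ • OmegaR r)

/-- Rotation matrix of a great-circle arc of angle `φ`. -/
noncomputable def RG (φ : ℝ) : Matrix (Fin 3) (Fin 3) ℝ := NormedSpace.exp (φ • OmegaG)

open NormedSpace in
lemma exp_cube (Ω : Matrix (Fin 3) (Fin 3) ℝ) (h : Ω ^ 3 = -Ω) (φ : ℝ) :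
    NormedSpace.exp (φ • Ω) = 1 + Real.sin φ • Ω + (1 - Real.cos φ) • Ω ^ 2 := by
  letI : SeminormedRing (Matrix (Fin 3) (Fin 3) ℝ) := Matrix.linftyOpSemiNormedRing
  letI : NormedRing (Matrix (Fin 3) (Fin 3) ℝ) := Matrix.linftyOpNormedRing
  letI : NormedAlgebra ℝ (Matrix (Fin 3) (Fin 3) ℝ) := Matrix.linftyOpNormedAlgebra
  have hodd : ∀ k : ℕ, Ω ^ (2 * k + 1) = ((-1 : ℝ) ^ k) • Ω := by
    intro k
    induction k with
    | zero => simp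
    | succ k ih =>
      have h1 : 2 * (k + 1) + 1 = (2 * k + 1) + 2 := by ring
      rw [h1, pow_add, ih, Matrix.smul_mul, ← pow_succ', h, pow_succ]
      module
  have heven : ∀ k : ℕ, Ω ^ (2 * k + 2) = ((-1 : ℝ) ^ k) • Ω ^ 2 := by
    intro k
    have h1 : 2 * k + 2 = (2 * k + 1) + 1 := by ring
    rw [h1, pow_succ, hodd, Matrix.smul_mul, ← pow_two]
  -- the series
  set f : ℕ → Matrix (Fin 3) (Fin 3) ℝ := fun n => (φ ^ n / n.factorial) • Ω ^ n with hf
  have hfeq : (fun n : ℕ => ((n.factorial : ℝ))⁻¹ • (φ • Ω) ^ n) = f := by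
    funext n
    simp only [hf, smul_pow, smul_smul]
    congr 1
    field_simp
  have hsumf : Summable f := by
    rw [← hfeq]; exact expSeries_summable' (φ • Ω)
  have hse : Summable fun k => f (2 * k) := hsumf.comp_injective fun a b hab => by omega
  have hso : Summable fun k => f (2 * k + 1) := hsumf.comp_injective fun a b hab => by omega
  have hsin := Real.hasSum_sin φ
  have hcos := Real.hasSum_cos φ
  rw [exp_eq_tsum (𝕂 := ℝ)]
  dsimp only
  rw [hfeq, ← tsum_even_add_odd hse hso]
  -- odd part
  have hoddsum : ∑' k, f (2 * k + 1) = Real.sin φ • Ω := by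
    have : ∀ k : ℕ, f (2 * k + 1) = ((-1) ^ k * φ ^ (2 * k + 1) / (2 * k + 1).factorial) • Ω := by
      intro k
      rw [hf]; dsimp only
      rw [hodd k, smul_smul]
      congr 1
      ring
    rw [tsum_congr this, Summable.tsum_smul_const hsin.summable, hsin.tsum_eq]
  -- even part
  have hevensum : ∑' k, f (2 * k) = 1 + (1 - Real.cos φ) • Ω ^ 2 := by
    have h0 : ∑' k, f (2 * k) = f 0 + ∑' k, f (2 * (k + 1)) := by
      have := Summable.tsum_eq_zero_add (f := fun k => f (2 * k)) hse
      simpa using this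
    have h2 : ∀ k : ℕ, f (2 * (k + 1)) = ((-1) ^ (k + 1) * φ ^ (2 * (k+1)) / (2 * (k+1)).factorial) • (-(Ω ^ 2)) := by
      intro k
      rw [hf]; dsimp only
      have h3 : 2 * (k + 1) = 2 * k + 2 := by ring
      rw [h3, heven k, smul_smul, ← h3, smul_neg, ← neg_smul]
      congr 1
      rw [pow_succ]
      ring
    have hcs : Summable fun k : ℕ => (-1 : ℝ) ^ (k+1) * φ ^ (2 * (k+1)) / (2 * (k+1)).factorial :=
      hcos.summable.comp_injective fun a b hab => by omega
    rw [h0, tsum_congr h2, Summable.tsum_smul_const hcs]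
    have hcos' : Real.cos φ = 1 + ∑' k : ℕ, (-1:ℝ) ^ (k+1) * φ ^ (2*(k+1)) / (2*(k+1)).factorial := by
      rw [← hcos.tsum_eq, Summable.tsum_eq_zero_add hcos.summable]
      norm_num
    have : ∑' k : ℕ, (-1:ℝ) ^ (k+1) * φ ^ (2*(k+1)) / (2*(k+1)).factorial = Real.cos φ - 1 := by
      rw [hcos']; ring
    rw [this, hf]
    dsimp only
    simp only [pow_zero, Nat.factorial_zero]
    module
  rw [hoddsum, hevensum]
  abel

set_option maxHeartbeats 1000000 in
theorem E1lem (r s c sb cb : ℝ) (hq : Real.sqrt (1 - r ^ 2) ^ 2 = 1 - r ^ 2)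
    (hsb : sb ^ 2 = 1 - cb ^ 2)
    (hs' : s * (1 - 2 * r ^ 2 * (1 - r ^ 2) * (1 + cb)) = sb * (1 - 2 * r ^ 2))
    (hc' : c * (2 * (1 - 2 * r ^ 2 * (1 - r ^ 2) * (1 + cb))) =
      -(4 * r ^ 2 * (r ^ 2 - 1) + cb * (1 + (1 - 2 * r ^ 2) ^ 2)))
    (hd : 0 < 1 - 2 * r ^ 2 * (1 - r ^ 2) * (1 + cb)) :
    (1 + -s • OmegaL r + (1 - -c) • OmegaL r ^ 2) *
        (1 + sb • OmegaR r + (1 - -cb) • OmegaR r ^ 2) =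
      (1 + -sb • OmegaR r + (1 - -cb) • OmegaR r ^ 2) *
        (1 + s • OmegaL r + (1 - -c) • OmegaL r ^ 2) := by
  have h2d : (2 * (1 - 2 * r ^ 2 * (1 - r ^ 2) * (1 + cb)) : ℝ) ≠ 0 := by positivity
  rw [pow_two (OmegaL r), pow_two (OmegaR r)]
  ext i j
  fin_cases i <;> fin_cases j <;>
    simp [OmegaL, OmegaR, Matrix.mul_apply, Fin.sum_univ_three, Matrix.one_apply]
  · ring
  · refine mul_left_cancel₀ h2d ?_
    linear_combination (((4:ℝ)*r + (-4:ℝ)*r^3 + (-4:ℝ)*cb*r^3)) * hs' + (((2:ℝ)*sb*r^3)) * hc' + (0) * hq + (0) * hsb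
  · refine mul_left_cancel₀ h2d ?_
    linear_combination (((4:ℝ)*(Real.sqrt (1 - r ^ 2))*sb*r)) * hs' + (((2:ℝ)*(Real.sqrt (1 - r ^ 2))*r^3 + (2:ℝ)*(Real.sqrt (1 - r ^ 2))*cb*r^3 + (-2:ℝ)*(Real.sqrt (1 - r ^ 2))^3*r + (-2:ℝ)*(Real.sqrt (1 - r ^ 2))^3*cb*r)) * hc' + (((-4:ℝ)*(Real.sqrt (1 - r ^ 2))*r + (4:ℝ)*(Real.sqrt (1 - r ^ 2))*cb^2*r)) * hq + (((4:ℝ)*(Real.sqrt (1 - r ^ 2))*r + (-8:ℝ)*(Real.sqrt (1 - r ^ 2))*r^3)) * hsb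
  · refine mul_left_cancel₀ h2d ?_
    linear_combination (((-4:ℝ)*r + (4:ℝ)*r^3 + (4:ℝ)*cb*r^3)) * hs' + (((-2:ℝ)*sb*r^3)) * hc' + (0) * hq + (0) * hsb
  · ring
  · refine mul_left_cancel₀ h2d ?_
    linear_combination (((4:ℝ)*(Real.sqrt (1 - r ^ 2)) + (-4:ℝ)*(Real.sqrt (1 - r ^ 2))^3 + (-4:ℝ)*(Real.sqrt (1 - r ^ 2))^3*cb)) * hs' + (((-2:ℝ)*(Real.sqrt (1 - r ^ 2))^3*sb)) * hc' + (((-8:ℝ)*(Real.sqrt (1 - r ^ 2))*sb + (8:ℝ)*(Real.sqrt (1 - r ^ 2))*sb*r^2 + (8:ℝ)*(Real.sqrt (1 - r ^ 2))*sb*cb*r^2)) * hq + (0) * hsb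
  · refine mul_left_cancel₀ h2d ?_
    linear_combination (((-4:ℝ)*(Real.sqrt (1 - r ^ 2))*sb*r)) * hs' + (((-2:ℝ)*(Real.sqrt (1 - r ^ 2))*r^3 + (-2:ℝ)*(Real.sqrt (1 - r ^ 2))*cb*r^3 + (2:ℝ)*(Real.sqrt (1 - r ^ 2))^3*r + (2:ℝ)*(Real.sqrt (1 - r ^ 2))^3*cb*r)) * hc' + (((4:ℝ)*(Real.sqrt (1 - r ^ 2))*r + (-4:ℝ)*(Real.sqrt (1 - r ^ 2))*cb^2*r)) * hq + (((-4:ℝ)*(Real.sqrt (1 - r ^ 2))*r + (8:ℝ)*(Real.sqrt (1 - r ^ 2))*r^3)) * hsb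
  · refine mul_left_cancel₀ h2d ?_
    linear_combination (((-4:ℝ)*(Real.sqrt (1 - r ^ 2)) + (4:ℝ)*(Real.sqrt (1 - r ^ 2))^3 + (4:ℝ)*(Real.sqrt (1 - r ^ 2))^3*cb)) * hs' + (((2:ℝ)*(Real.sqrt (1 - r ^ 2))^3*sb)) * hc' + (((8:ℝ)*(Real.sqrt (1 - r ^ 2))*sb + (-8:ℝ)*(Real.sqrt (1 - r ^ 2))*sb*r^2 + (-8:ℝ)*(Real.sqrt (1 - r ^ 2))*sb*cb*r^2)) * hq + (0) * hsb
  · ring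

lemma OmegaL_cube (r : ℝ) (h : r ^ 2 ≤ 1) : OmegaL r ^ 3 = -(OmegaL r) := by
  have hq : Real.sqrt (1 - r ^ 2) ^ 2 = 1 - r ^ 2 := Real.sq_sqrt (by linarith)
  have hq3 : Real.sqrt (1 - r ^ 2) ^ 3 = (1 - r ^ 2) * Real.sqrt (1 - r ^ 2) := by
    rw [pow_succ, hq]
  ext i j
  fin_cases i <;> fin_cases j <;>
    simp [OmegaL, pow_succ, Matrix.mul_apply, Fin.sum_univ_three] <;>
    · ring_nf
      simp only [hq, hq3]
      ring

lemma OmegaR_cube (r : ℝ) (h : r ^ 2 ≤ 1) : OmegaR r ^ 3 = -(OmegaR r) := by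
  have hq : Real.sqrt (1 - r ^ 2) ^ 2 = 1 - r ^ 2 := Real.sq_sqrt (by linarith)
  have hq3 : Real.sqrt (1 - r ^ 2) ^ 3 = (1 - r ^ 2) * Real.sqrt (1 - r ^ 2) := by
    rw [pow_succ, hq]
  ext i j
  fin_cases i <;> fin_cases j <;>
    simp [OmegaR, pow_succ, Matrix.mul_apply, Fin.sum_univ_three] <;>
    · ring_nf
      simp only [hq, hq3]
      ring

set_option maxHeartbeats 1000000 in
theorem stmt_0 (r β : ℝ) (hr : 0 < r) (hr' : r ≤ 1 / Real.sqrt 2)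
    (hβ : β ∈ Set.Ioo (0 : ℝ) Real.pi) :
    0 < 1 - 2 * r ^ 2 * (1 - r ^ 2) * (1 + Real.cos β) ∧
    ∃ φ ∈ Set.Icc (0 : ℝ) Real.pi,
      Real.sin φ =
        Real.sin β * (1 - 2 * r ^ 2) / (1 - 2 * r ^ 2 * (1 - r ^ 2) * (1 + Real.cos β)) ∧
      Real.cos φ =
        -((4 * r ^ 2 * (r ^ 2 - 1) + Real.cos β * (1 + (1 - 2 * r ^ 2) ^ 2)) /
          (2 * (1 - 2 * r ^ 2 * (1 - r ^ 2) * (1 + Real.cos β)))) ∧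
      RL r φ * RR r (Real.pi - β) * RL r φ =
        RL r Real.pi * RR r (Real.pi + β) * RL r Real.pi ∧
      r * (2 * φ + (Real.pi - β)) < r * (2 * Real.pi + (Real.pi + β)) := by
  obtain ⟨hβ0, hβπ⟩ := hβ
  have hr2 : r ^ 2 ≤ 1 / 2 := by
    have h := pow_le_pow_left₀ hr.le hr' 2
    rw [div_pow, one_pow, Real.sq_sqrt (by norm_num : (0:ℝ) ≤ 2)] at h
    linarith
  have hq : Real.sqrt (1 - r ^ 2) ^ 2 = 1 - r ^ 2 := Real.sq_sqrt (by nlinarith)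
  have hsb : Real.sin β ^ 2 = 1 - Real.cos β ^ 2 := Real.sin_sq β
  have hsb0 : 0 ≤ Real.sin β := Real.sin_nonneg_of_nonneg_of_le_pi hβ0.le hβπ.le
  have hcb1 : Real.cos β < 1 := by
    have := Real.cos_lt_cos_of_nonneg_of_le_pi le_rfl hβπ.le hβ0
    simpa using this
  have hcbneg : -1 < Real.cos β := by
    have := Real.cos_lt_cos_of_nonneg_of_le_pi hβ0.le le_rfl hβπ
    simpa using this
  have hd : 0 < 1 - 2 * r ^ 2 * (1 - r ^ 2) * (1 + Real.cos β) := by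
    have h1 : 2 * r ^ 2 * (1 - r ^ 2) ≤ 1 / 2 := by nlinarith [sq_nonneg (1 - 2 * r ^ 2)]
    have h3 : (0:ℝ) ≤ 1 + Real.cos β := by linarith
    nlinarith [mul_le_mul_of_nonneg_right h1 h3]
  refine ⟨hd, ?_⟩
  set d : ℝ := 1 - 2 * r ^ 2 * (1 - r ^ 2) * (1 + Real.cos β) with hddef
  set N : ℝ := 4 * r ^ 2 * (r ^ 2 - 1) + Real.cos β * (1 + (1 - 2 * r ^ 2) ^ 2) with hNdef
  have key : 4 * (Real.sin β * (1 - 2 * r ^ 2)) ^ 2 + N ^ 2 = 4 * d ^ 2 := by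
    rw [hNdef, hddef]
    linear_combination ((4:ℝ) + (-16)*r^2 + 16*r^4) * hsb
  have hNle : N ≤ 2 * d := by nlinarith [sq_nonneg (Real.sin β * (1 - 2 * r ^ 2)), sq_nonneg (N - 2*d), sq_nonneg (N + 2*d)]
  have hNge : -(2 * d) ≤ N := by nlinarith [sq_nonneg (Real.sin β * (1 - 2 * r ^ 2)), sq_nonneg (N - 2*d), sq_nonneg (N + 2*d)]
  set x : ℝ := -(N / (2 * d)) with hxdef
  have h2dpos : (0:ℝ) < 2 * d := by linarith
  have hx1 : -1 ≤ x := by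
    rw [hxdef, neg_le, neg_neg, div_le_one h2dpos]
    exact hNle
  have hx2 : x ≤ 1 := by
    rw [hxdef, ← neg_div, div_le_one h2dpos]
    linarith
  have hcos : Real.cos (Real.arccos x) = x := Real.cos_arccos hx1 hx2
  have h12 : (0:ℝ) ≤ 1 - 2 * r ^ 2 := by linarith
  have hsin : Real.sin (Real.arccos x) = Real.sin β * (1 - 2 * r ^ 2) / d := by
    rw [Real.sin_arccos]
    have h1 : 1 - x ^ 2 = (Real.sin β * (1 - 2 * r ^ 2) / d) ^ 2 := by
      rw [hxdef]
      simp only [neg_sq, div_pow]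
      rw [sub_eq_iff_eq_add, div_add_div _ _ (by positivity) (by positivity), eq_div_iff (by positivity)]
      linear_combination (-(d^2)) * key
    rw [h1, Real.sqrt_sq (div_nonneg (mul_nonneg hsb0 h12) hd.le)]
  refine ⟨Real.arccos x, ⟨Real.arccos_nonneg x, Real.arccos_le_pi x⟩, hsin, ?_, ?_, ?_⟩
  · rw [hcos, hxdef]
  · -- the matrix identity
    set φ : ℝ := Real.arccos x with hφdef
    have hs' : Real.sin φ * d = Real.sin β * (1 - 2 * r ^ 2) := by
      rw [hsin]
      field_simp
    have hc' : Real.cos φ * (2 * d) = -N := by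
      rw [hcos, hxdef]
      field_simp
    have hL3 : OmegaL r ^ 3 = -(OmegaL r) := OmegaL_cube r (by linarith)
    have hR3 : OmegaR r ^ 3 = -(OmegaR r) := OmegaR_cube r (by linarith)
    have hRL : ∀ a : ℝ, RL r a = 1 + Real.sin a • OmegaL r + (1 - Real.cos a) • OmegaL r ^ 2 :=
      fun a => exp_cube (OmegaL r) hL3 a
    have hRR : ∀ a : ℝ, RR r a = 1 + Real.sin a • OmegaR r + (1 - Real.cos a) • OmegaR r ^ 2 :=
      fun a => exp_cube (OmegaR r) hR3 a
    have hadd : ∀ a b : ℝ, RL r a * RL r b = RL r (a + b) := by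
      intro a b
      have hcomm : Commute (a • OmegaL r) (b • OmegaL r) :=
        ((Commute.refl (OmegaL r)).smul_left a).smul_right b
      have := Matrix.exp_add_of_commute (a • OmegaL r) (b • OmegaL r) hcomm
      rw [RL, RL, RL, ← this, ← add_smul]
    have hone : RL r 0 = 1 := by
      rw [hRL 0]
      simp
    -- key two-matrix identity
    have e1 : RL r (φ + Real.pi) * RR r (Real.pi - β) =
        RR r (Real.pi + β) * RL r (-(φ + Real.pi)) := by
      rw [hRL (φ + Real.pi), hRR (Real.pi - β), hRR (Real.pi + β), hRL (-(φ + Real.pi))]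
      rw [Real.sin_add_pi, Real.cos_add_pi, Real.sin_pi_sub, Real.cos_pi_sub,
        show Real.pi + β = β + Real.pi by ring, Real.sin_add_pi, Real.cos_add_pi,
        Real.sin_neg, Real.cos_neg, Real.sin_add_pi, Real.cos_add_pi, neg_neg]
      exact E1lem r (Real.sin φ) (Real.cos φ) (Real.sin β) (Real.cos β) hq hsb hs' hc' hd
    have e2 : RL r (φ + Real.pi) * RR r (Real.pi - β) * RL r (φ + Real.pi) =
        RR r (Real.pi + β) := by
      rw [e1, mul_assoc, hadd, neg_add_cancel, hone, mul_one]
    have wrap : RL r (φ + 2 * Real.pi) = RL r φ := by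
      rw [hRL (φ + 2 * Real.pi), hRL φ, Real.sin_add_two_pi, Real.cos_add_two_pi]
    calc RL r φ * RR r (Real.pi - β) * RL r φ
        = RL r (φ + 2 * Real.pi) * RR r (Real.pi - β) * RL r (φ + 2 * Real.pi) := by rw [wrap]
      _ = (RL r Real.pi * RL r (φ + Real.pi)) * RR r (Real.pi - β) *
            (RL r (φ + Real.pi) * RL r Real.pi) := by
          rw [hadd, hadd, show Real.pi + (φ + Real.pi) = φ + 2 * Real.pi by ring,
            show φ + Real.pi + Real.pi = φ + 2 * Real.pi by ring]
      _ = RL r Real.pi * (RL r (φ + Real.pi) * RR r (Real.pi - β) * RL r (φ + Real.pi)) *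
            RL r Real.pi := by simp only [mul_assoc]
      _ = RL r Real.pi * RR r (Real.pi + β) * RL r Real.pi := by rw [e2]
  · -- length comparison
    have h1 : Real.arccos x ≤ Real.pi := Real.arccos_le_pi x
    have := Real.pi_pos
    nlinarith [hr, hβ0, h1]
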